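/- Let V₃ be the digraph on vertices {1,2,3} with arcs (1,2) and (3,2) (the orientation of the path on three vertices whose middle vertex is a sink). Let O be a finite digraph such that (i) every 2-coloring c : V(O) → Fin 2 admits a monochromatic induced copy of V₃, and (ii) for every color i ∈ Fin 3 there exists a V₃-free 3-coloring of O in which exactly one vertex of O receives color i. Let D be any finite digraph, and let D' be obtained from D by adding, for each vertex v of D, a disjoint new copy O_v of O together with all arcs (u,v) for u a vertex of O_v. Then the underlying graph of D admits a proper 3-coloring if and only if D' admits a V₃-free 3-coloring. -/

import Mathlib

/-- A simple digraph on vertex type `V`: no loops and no anti-parallel arcs. -/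
structure Digraph' (V : Type*) : Type _ where
  Adj : V → V → Prop
  loopless : ∀ v, ¬ Adj v v
  asymm : ∀ u v, Adj u v → ¬ Adj v u

/-- An induced copy of the digraph `F` in the digraph `D`, given by the embedding `φ`. -/
def IsInducedCopy {α β : Type*} (F : Digraph' α) (D : Digraph' β) (φ : α → β) : Prop :=
  Function.Injective φ ∧ ∀ u v : α, D.Adj (φ u) (φ v) ↔ F.Adj u v

/-- The image of `φ` is monochromatic under the coloring `c`. -/
def Monochromatic {α β : Type*} {k : ℕ} (c : β → Fin k) (φ : α → β) : Prop :=
  ∃ i : Fin k, ∀ u : α, c (φ u) = i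

/-- The coloring `c` of `D` is `F`-free: no induced copy of `F` in `D` is monochromatic. -/
def IsFFreeColoring {α β : Type*} (F : Digraph' α) (D : Digraph' β) {k : ℕ}
    (c : β → Fin k) : Prop :=
  ∀ φ : α → β, IsInducedCopy F D φ → ¬ Monochromatic c φ

/-- A digraph is acyclic if it contains no directed cycle. -/
def Digraph'.Acyclic {β : Type*} (D : Digraph' β) : Prop :=
  ∀ v : β, ¬ Relation.TransGen D.Adj v v

/-- The underlying simple graph of a digraph. -/
def Digraph'.underlying {V : Type*} (D : Digraph' V) : SimpleGraph V where
  Adj u v := D.Adj u v ∨ D.Adj v u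
  symm := ⟨by intros; exact Or.symm ‹_›⟩
  loopless := ⟨by intro v h; exact h.elim (D.loopless v) (D.loopless v)⟩

/-- The orientation of the path on three vertices `0, 1, 2` whose middle vertex `1` is a
sink: arcs `(0, 1)` and `(2, 1)` (vertices `1,2,3` of the statement are `0,1,2` here). -/
def V3sink : Digraph' (Fin 3) where
  Adj u v := (u = 0 ∧ v = 1) ∨ (u = 2 ∧ v = 1)
  loopless := by decide
  asymm := by decide

/-- The arc relation of the digraph `D'` obtained from `D` by adding, for each vertex `v` of
`D`, a disjoint copy of `O` together with all arcs `(u, v)` for `u` a vertex of that copy. -/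
def attachMinusRel {V ω : Type*} (D : Digraph' V) (O : Digraph' ω) :
    (V ⊕ (V × ω)) → (V ⊕ (V × ω)) → Prop
  | Sum.inl u, Sum.inl v => D.Adj u v
  | Sum.inl _, Sum.inr _ => False
  | Sum.inr (w, _), Sum.inl v => v = w
  | Sum.inr (v, u), Sum.inr (v', u') => v = v' ∧ O.Adj u u'

lemma fin3_aux : ∀ i a b : Fin 3, a ≠ i → b ≠ i →
    ((if a = i + 1 then (0 : Fin 2) else 1) = (if b = i + 1 then 0 else 1)) → a = b := by
  decide

/-- Let `O` be a finite digraph such that every `2`-coloring of `O` has a monochromatic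
induced copy of `V₃`, and for every color `i` there is a `V₃`-free `3`-coloring of `O` with
exactly one vertex of color `i`. Then the underlying graph of a finite digraph `D` is
properly `3`-colorable iff the digraph `D'`, obtained from `D` by attaching to each vertex
`v` a copy of `O` dominating `v`, admits a `V₃`-free `3`-coloring. -/
theorem statement6 {V ω : Type*} [Fintype V] [Fintype ω]
    (O : Digraph' ω)
    (hO2 : ∀ c : ω → Fin 2, ∃ φ : Fin 3 → ω, IsInducedCopy V3sink O φ ∧ Monochromatic c φ)
    (hO3 : ∀ i : Fin 3, ∃ c : ω → Fin 3,
      IsFFreeColoring V3sink O c ∧ ∃! x : ω, c x = i)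
    (D : Digraph' V)
    (D' : Digraph' (V ⊕ (V × ω)))
    (hD' : ∀ x y, D'.Adj x y ↔ attachMinusRel D O x y) :
    (∃ c : V → Fin 3, ∀ u v : V, D.underlying.Adj u v → c u ≠ c v) ↔
      (∃ c : (V ⊕ (V × ω)) → Fin 3, IsFFreeColoring V3sink D' c) := by
  classical
  constructor
  · rintro ⟨c, hc⟩
    choose σ hσ using hO3
    refine ⟨Sum.elim c (fun p => σ (c p.1) p.2), ?_⟩
    rintro φ ⟨hinj, hadjφ⟩ ⟨m, hm⟩
    have h01 : attachMinusRel D O (φ 0) (φ 1) :=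
      (hD' _ _).1 ((hadjφ 0 1).2 (Or.inl ⟨rfl, rfl⟩))
    have h21 : attachMinusRel D O (φ 2) (φ 1) :=
      (hD' _ _).1 ((hadjφ 2 1).2 (Or.inr ⟨rfl, rfl⟩))
    rcases hφ1 : φ 1 with v | ⟨w, u⟩
    · rw [hφ1] at h01 h21
      have e1 : c v = m := by have := hm 1; rw [hφ1] at this; exact this
      rcases hφ0 : φ 0 with a | ⟨w0, x⟩
      · rw [hφ0] at h01
        have e0 : c a = m := by have := hm 0; rw [hφ0] at this; exact this
        exact hc a v (Or.inl h01) (e0.trans e1.symm)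
      · rw [hφ0] at h01
        have hvw : v = w0 := h01
        subst hvw
        rcases hφ2 : φ 2 with b | ⟨w2, y⟩
        · rw [hφ2] at h21
          have e2 : c b = m := by have := hm 2; rw [hφ2] at this; exact this
          exact hc b v (Or.inl h21) (e2.trans e1.symm)
        · rw [hφ2] at h21
          have hvw2 : v = w2 := h21
          subst hvw2
          have e0 : σ (c v) x = m := by have := hm 0; rw [hφ0] at this; exact this
          have e2 : σ (c v) y = m := by have := hm 2; rw [hφ2] at this; exact this
          obtain ⟨-, z, hz, huniq⟩ := hσ (c v)
          have hxy : x = y := (huniq x (e0.trans e1.symm)).trans (huniq y (e2.trans e1.symm)).symm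
          subst hxy
          have : (0 : Fin 3) = 2 := hinj (hφ0.trans hφ2.symm)
          exact absurd this (by decide)
    · rw [hφ1] at h01 h21
      rcases hφ0 : φ 0 with a | ⟨w0, x⟩
      · rw [hφ0] at h01; exact h01
      · rw [hφ0] at h01
        obtain ⟨hw0, -⟩ : w0 = w ∧ O.Adj x u := h01
        obtain rfl := hw0
        rcases hφ2 : φ 2 with b | ⟨w2, y⟩
        · rw [hφ2] at h21; exact h21
        · rw [hφ2] at h21
          obtain ⟨hw2, -⟩ : w2 = w0 ∧ O.Adj y u := h21
          obtain rfl := hw2.symm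
          have hval : ∀ a : Fin 3, φ a = Sum.inr (w0, ![x, u, y] a) := by
            intro a
            fin_cases a
            · simpa using hφ0
            · simpa using hφ1
            · simpa using hφ2
          have hψ : IsInducedCopy V3sink O ![x, u, y] := by
            constructor
            · intro a b hab
              apply hinj
              rw [hval a, hval b, hab]
            · intro p q
              have h := hadjφ p q
              rw [hval p, hval q, hD'] at h
              simpa [attachMinusRel] using h
          refine (hσ (c w0)).1 _ hψ ⟨m, fun a => ?_⟩
          have := hm a
          rw [hval a] at this
          exact this
  · rintro ⟨c, hc⟩
    refine ⟨fun v => c (Sum.inl v), ?_⟩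
    have key : ∀ u v : V, D.Adj u v → c (Sum.inl u) ≠ c (Sum.inl v) := by
      intro u v hadj heq
      have hne : u ≠ v := fun h => D.loopless v (h ▸ hadj)
      have hasym := D.asymm u v hadj
      have step1 : ∀ x : ω, c (Sum.inr (v, x)) ≠ c (Sum.inl v) := by
        intro x hx
        have hcopy : IsInducedCopy V3sink D' ![Sum.inl u, Sum.inl v, Sum.inr (v, x)] := by
          constructor
          · intro a b hab
            fin_cases a <;> fin_cases b <;> simp_all
          · intro p q
            fin_cases p <;> fin_cases q <;>
              simp [hD', attachMinusRel, V3sink, D.loopless u, D.loopless v, hadj, hasym,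
                hne, Ne.symm hne, O.loopless x]
        refine hc _ hcopy ⟨c (Sum.inl v), fun a => ?_⟩
        fin_cases a <;> simp_all
      obtain ⟨ψ, hψcopy, b, hb⟩ :=
        hO2 (fun x => if c (Sum.inr (v, x)) = c (Sum.inl v) + 1 then 0 else 1)
      have hmono : ∀ a : Fin 3, c (Sum.inr (v, ψ a)) = c (Sum.inr (v, ψ 0)) := by
        intro a
        exact fin3_aux (c (Sum.inl v)) _ _ (step1 _) (step1 _) ((hb a).trans (hb 0).symm)
      have hlift : IsInducedCopy V3sink D' (fun a => Sum.inr (v, ψ a)) := by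
        constructor
        · intro a b hab
          apply hψcopy.1
          simpa using hab
        · intro p q
          rw [hD']
          simpa [attachMinusRel] using hψcopy.2 p q
      exact hc _ hlift ⟨c (Sum.inr (v, ψ 0)), hmono⟩
    intro u v huv
    rcases huv with h | h
    · exact key u v h
    · exact fun heq => key v u h heq.symm
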